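/- Suppose ω: ℂ → ℂ satisfies ω(k) = k - i D k² + E(k) with D ∈ ℝ, D ≥ 0, and |E(k)| ≤ C|k|³ for |k| ≤ r (C, r > 0). If Im ω(k) ≤ |Im k| for all complex k with |k| ≤ r, then D = 0. -/

import Mathlib

theorem luminal_sound_no_damping (ω E : ℂ → ℂ) (D C r : ℝ)
    (hD : 0 ≤ D) (hC : 0 < C) (hr : 0 < r)
    (hexp : ∀ k : ℂ, ‖k‖ ≤ r →
      ω k = k - Complex.I * (D : ℂ) * k ^ 2 + E k)
    (herr : ∀ k : ℂ, ‖k‖ ≤ r → ‖E k‖ ≤ C * ‖k‖ ^ 3)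
    (hstab : ∀ k : ℂ, ‖k‖ ≤ r → (ω k).im ≤ |k.im|) :
    D = 0 := by
  -- key: for all ε with 0 < ε ≤ r, D ≤ C * ε
  have key : ∀ ε : ℝ, 0 < ε → ε ≤ r → D ≤ C * ε := by
    intro ε hε hεr
    set k : ℂ := (ε : ℂ) * Complex.I with hk
    have habs : ‖k‖ = ε := by
      simp [hk, abs_of_pos hε]
    have hkr : ‖k‖ ≤ r := by rw [habs]; exact hεr
    have him : k.im = ε := by simp [hk]
    have hw := hexp k hkr
    have hwim : (ω k).im = ε + D * ε ^ 2 + (E k).im := by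
      rw [hw]
      have : (Complex.I * (D : ℂ) * k ^ 2) = -(D * ε ^ 2 : ℝ) * Complex.I := by
        rw [hk]; push_cast; rw [mul_pow, Complex.I_sq]; ring
      rw [this]
      simp [him, ← Complex.ofReal_pow]
    have hs := hstab k hkr
    rw [hwim, him, abs_of_pos hε] at hs
    have hE : -(E k).im ≤ C * ε ^ 3 := by
      have := herr k hkr
      rw [habs] at this
      calc -(E k).im ≤ |(E k).im| := neg_le_abs _
        _ ≤ ‖E k‖ := Complex.abs_im_le_norm _
        _ ≤ C * ε ^ 3 := this
    have h1 : D * ε ^ 2 ≤ C * ε ^ 3 := by nlinarith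
    have hε2 : (0:ℝ) < ε ^ 2 := by positivity
    nlinarith
  by_contra hne
  have hDpos : 0 < D := lt_of_le_of_ne hD (Ne.symm hne)
  set ε := min r (D / (2 * C)) with hε
  have hεpos : 0 < ε := lt_min hr (by positivity)
  have := key ε hεpos (min_le_left _ _)
  have h2 : C * ε ≤ D / 2 := by
    have : ε ≤ D / (2 * C) := min_le_right _ _
    calc C * ε ≤ C * (D / (2 * C)) := by nlinarith
      _ = D / 2 := by field_simp
  linarith
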